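/- Let n ≥ 1 and let f : ℝⁿ → ℝ be a C¹-smooth convex function such that ∇f(x₀) = 0 for some x₀ ∈ ℝⁿ, and suppose f is C²-smooth and strictly convex on an open neighborhood of x₀. Then ∇f(x) ≠ 0 for every x ∈ ℝⁿ with x ≠ x₀. -/

import Mathlib

open Real Gradient

theorem stmt_16 (n : ℕ) (hn : 1 ≤ n) (f : EuclideanSpace ℝ (Fin n) → ℝ)
    (hf : ContDiff ℝ 1 f) (hconv : ConvexOn ℝ Set.univ f)
    (x₀ : EuclideanSpace ℝ (Fin n)) (hx₀ : ∇ f x₀ = 0)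
    (U : Set (EuclideanSpace ℝ (Fin n))) (hUopen : IsOpen U) (hx₀U : x₀ ∈ U)
    (hfU : ContDiffOn ℝ 2 f U) (hsconv : StrictConvexOn ℝ U f) :
    ∀ x : EuclideanSpace ℝ (Fin n), x ≠ x₀ → ∇ f x ≠ 0 := by
  intro x hx hgx
  set v : EuclideanSpace ℝ (Fin n) := x - x₀ with hv
  have hvne : v ≠ 0 := sub_ne_zero.mpr hx
  set φ : ℝ → EuclideanSpace ℝ (Fin n) := fun t => x₀ + t • v with hφ
  set g : ℝ → ℝ := fun t => f (φ t) with hg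
  have hdiff : Differentiable ℝ f := hf.differentiable one_ne_zero
  -- derivative of g
  have hφd : ∀ t : ℝ, HasDerivAt φ v t := by
    intro t
    simpa [hφ] using ((hasDerivAt_id t).smul_const v).const_add x₀
  have hgd : ∀ t : ℝ, HasDerivAt g (inner ℝ (∇ f (φ t)) v) t := by
    intro t
    have hgrad : HasGradientAt f (∇ f (φ t)) (φ t) := (hdiff (φ t)).hasGradientAt
    have := hgrad.hasFDerivAt.comp_hasDerivAt t (hφd t)
    simp at this ⊢
    exact this
  have hg0 : HasDerivAt g 0 0 := by
    have := hgd 0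
    rw [show φ 0 = x₀ by simp [hφ], hx₀] at this
    simpa using this
  have hg1 : HasDerivAt g 0 1 := by
    have := hgd 1
    rw [show φ 1 = x by simp [hφ, hv], hgx] at this
    simpa using this
  -- convexity of g
  have hgconv : ConvexOn ℝ Set.univ g := by
    have := hconv.comp_affineMap (AffineMap.lineMap x₀ x)
    have heq : g = f ∘ (AffineMap.lineMap x₀ x) := by
      funext t
      simp [hg, hφ, hv, AffineMap.lineMap_apply, add_comm]
    rw [heq]
    simpa using this
  -- g 1 = g 0
  have h01 : g 1 = g 0 := by
    have h1 : (0:ℝ) ≤ slope g 0 1 :=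
      hgconv.le_slope_of_hasDerivAt (Set.mem_univ 0) (Set.mem_univ 1) one_pos hg0
    have h2 : slope g 0 1 ≤ 0 :=
      hgconv.slope_le_of_hasDerivAt (Set.mem_univ 0) (Set.mem_univ 1) one_pos hg1
    have : slope g 0 1 = 0 := le_antisymm h2 h1
    have := this
    rw [slope_def_field] at this
    field_simp at this
    linarith [this]
  -- g t = g 0 for t in [0,1]
  have hconst : ∀ t : ℝ, 0 ≤ t → t ≤ 1 → g t = g 0 := by
    intro t ht0 ht1
    rcases eq_or_lt_of_le ht0 with h | h
    · rw [← h]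
    have hle : g t ≤ g 0 := by
      have := hgconv.2 (Set.mem_univ 1) (Set.mem_univ 0) (le_of_lt h)
        (by linarith : (0:ℝ) ≤ 1 - t) (by ring)
      have he : t • (1:ℝ) + (1 - t) • (0:ℝ) = t := by simp
      rw [he] at this
      calc g t ≤ t • g 1 + (1 - t) • g 0 := this
        _ = g 0 := by rw [h01]; simp [smul_eq_mul]; ring
    have hge : g 0 ≤ g t := by
      have := hgconv.le_slope_of_hasDerivAt (Set.mem_univ 0) (Set.mem_univ t) h hg0
      rw [slope_def_field, sub_zero] at this
      rcases div_nonneg_iff.mp this with ⟨h1, _⟩ | ⟨_, h2⟩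
      · linarith
      · linarith
    linarith
  -- find small t₁ with φ t₁ ∈ U
  have hcont : Continuous φ := by
    apply continuous_const.add (continuous_id.smul continuous_const)
  have hopen : IsOpen (φ ⁻¹' U) := hUopen.preimage hcont
  have h0mem : (0:ℝ) ∈ φ ⁻¹' U := by simp [hφ, hx₀U]
  obtain ⟨ε, hε, hball⟩ := Metric.isOpen_iff.mp hopen 0 h0mem
  set t₁ : ℝ := min (ε / 2) 1 with ht₁
  have ht₁pos : 0 < t₁ := lt_min (by linarith) one_pos
  have ht₁le1 : t₁ ≤ 1 := min_le_right _ _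
  have ht₁U : φ t₁ ∈ U := by
    apply hball
    simp only [Metric.mem_ball, Real.dist_eq, sub_zero]
    rw [abs_of_pos ht₁pos]
    calc t₁ ≤ ε / 2 := min_le_left _ _
      _ < ε := by linarith
  have hφ0ne : φ t₁ ≠ x₀ := by
    simp only [hφ]
    intro hc
    apply hvne
    have : t₁ • v = 0 := by
      have := hc
      rwa [add_eq_left] at this
    rcases smul_eq_zero.mp this with h | h
    · exact absurd h (ne_of_gt ht₁pos)
    · exact h
  -- strict convexity contradiction at midpoint
  have hmid := hsconv.2 hx₀U ht₁U (Ne.symm hφ0ne)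
    (by norm_num : (0:ℝ) < 1/2) (by norm_num : (0:ℝ) < 1/2) (by norm_num)
  have hmideq : (1/2 : ℝ) • x₀ + (1/2 : ℝ) • (φ t₁) = φ (t₁ / 2) := by
    simp only [hφ]
    rw [smul_add, smul_smul]
    rw [← add_assoc, ← add_smul]
    norm_num
    congr 1
    ring
  rw [hmideq] at hmid
  have e1 : f (φ (t₁/2)) = g 0 := hconst (t₁/2) (by linarith) (by linarith)
  have e2 : f (φ t₁) = g 0 := hconst t₁ (le_of_lt ht₁pos) ht₁le1
  have e3 : f x₀ = g 0 := by simp [hg, hφ]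
  rw [e1, e2, e3] at hmid
  simp only [smul_eq_mul] at hmid
  linarith
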